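/- arXiv:1412.3842 — 3 statements merged into one kernel-verified Lean document; each statement's English description precedes it below -/
import Mathlib

section
/- With D_{p̄} as defined (the set of strictly increasing (n+1)-tuples x̄ in ℕ with x₁ ≥ p₀ and xᵢ₊₁ - xᵢ ≥ pᵢ + 1 for each i), if D_{p̄} ⊆ D_{q̄₁} ∪ ⋯ ∪ D_{q̄ₗ}, then there exists some k with D_{p̄} ⊆ D_{q̄ₖ}. -/
/-- For `p̄ = (p₀, …, pₙ)`, `D p̄` is the set of strictly increasing `(n+1)`-tuples
`x̄` of naturals with `x₀ ≥ p₀` and `xᵢ₊₁ > xᵢ + pᵢ₊₁` for each `i`. -/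
def D {n : ℕ} (p : Fin (n + 1) → ℕ) : Set (Fin (n + 1) → ℕ) :=
  {x | StrictMono x ∧ p 0 ≤ x 0 ∧ ∀ i : Fin n, x i.castSucc + p i.succ < x i.succ}

/-- The canonical witness `p̂`. -/
def Dwitness {n : ℕ} (p : Fin (n + 1) → ℕ) : Fin (n + 1) → ℕ :=
  fun i => i.val + ∑ j ∈ Finset.range (i.val + 1),
    (if h : j < n + 1 then p ⟨j, h⟩ else 0)

lemma Dwitness_succ {n : ℕ} (p : Fin (n + 1) → ℕ) (i : Fin n) :
    Dwitness p i.succ = Dwitness p i.castSucc + p i.succ + 1 := by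
  simp only [Dwitness, Fin.val_succ, Fin.coe_castSucc,
    Finset.sum_range_succ (n := i.val + 1)]
  have hi : i.val + 1 < n + 1 := by omega
  rw [dif_pos hi]
  have : (⟨i.val + 1, hi⟩ : Fin (n + 1)) = i.succ := rfl
  rw [this]; ring

lemma Dwitness_mem {n : ℕ} (p : Fin (n + 1) → ℕ) : Dwitness p ∈ D p := by
  have h0 : Dwitness p 0 = p 0 := by
    simp [Dwitness]
  refine ⟨?_, h0.ge, fun i => ?_⟩
  · rw [Fin.strictMono_iff_lt_succ]
    intro i
    rw [Dwitness_succ]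
    omega
  · rw [Dwitness_succ]; omega

lemma D_mono {n : ℕ} {p r : Fin (n + 1) → ℕ} (hle : ∀ i, r i ≤ p i) :
    D p ⊆ D r := by
  rintro x ⟨h1, h2, h3⟩
  refine ⟨h1, le_trans (hle 0) h2, fun i => ?_⟩
  have := h3 i
  have := hle i.succ
  omega

/-- If `D p̄` is contained in a finite union `D q̄₁ ∪ ⋯ ∪ D q̄ₗ`, then it is contained
in a single `D q̄ₖ`. -/
theorem D_subset_finite_union (n l : ℕ) (p : Fin (n + 1) → ℕ)
    (q : Fin l → Fin (n + 1) → ℕ) (h : D p ⊆ ⋃ k : Fin l, D (q k)) :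
    ∃ k : Fin l, D p ⊆ D (q k) := by
  obtain ⟨k, hk⟩ := Set.mem_iUnion.mp (h (Dwitness_mem p))
  refine ⟨k, D_mono fun i => ?_⟩
  obtain ⟨_, h2, h3⟩ := hk
  have h0 : Dwitness p 0 = p 0 := by simp [Dwitness]
  induction i using Fin.cases with
  | zero => omega
  | succ j =>
    have := h3 j
    rw [Dwitness_succ] at this
    omega
end

section
/- The collection of finite unions of sets of the form D_{p̄} (for p̄ ∈ ℕ^{n+1}), ordered by reverse inclusion, is a well-quasi-order: there is no infinite strictly increasing chain under inclusion and no infinite antichain under inclusion. -/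
/-- The collection of finite unions of sets `D p̄`. -/
def FinUnionD (n : ℕ) : Set (Set (Fin (n + 1) → ℕ)) :=
  {S | ∃ F : Finset (Fin (n + 1) → ℕ), S = ⋃ p ∈ F, D p}

namespace FinUnionDAux

/-- The value type for box bounds: `ℕ` extended with `⊥` (empty) and `⊤` (no bound). -/
abbrev V : Type := WithBot (WithTop ℕ)

/-- Embedding of `ℕ` into `V`. -/
def emb (m : ℕ) : V := ((m : WithTop ℕ) : V)

/-- "Predecessor": values `≤ e p` in the image of `emb` are exactly the naturals `< p`. -/
def e : ℕ → V
  | 0 => ⊥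
  | m + 1 => emb m

lemma emb_le_emb {x y : ℕ} : emb x ≤ emb y ↔ x ≤ y := by
  simp [emb]

lemma emb_le_e {x p : ℕ} : emb x ≤ e p ↔ x < p := by
  cases p with
  | zero =>
    simp only [e]
    constructor
    · intro h; exact absurd h (by simp [emb])
    · omega
  | succ m =>
    simp only [e]
    rw [emb_le_emb]
    omega

/-- `x` lies in the box with upper corner `a`. -/
def inBox {k : ℕ} (x : Fin k → ℕ) (a : Fin k → V) : Prop := ∀ i, emb (x i) ≤ a i

/-- A finite list of boxes whose union is the complement of the upward closure
of the elements of `l`. -/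
def boxes {k : ℕ} : List (Fin k → ℕ) → List (Fin k → V)
  | [] => [fun _ => ⊤]
  | p :: l =>
    (boxes l).flatMap fun a =>
      (List.finRange k).map fun j => fun i => if i = j then min (e (p i)) (a i) else a i

lemma mem_boxes {k : ℕ} (l : List (Fin k → ℕ)) (x : Fin k → ℕ) :
    (∃ b ∈ boxes l, inBox x b) ↔ ∀ p ∈ l, ∃ j, x j < p j := by
  induction l with
  | nil =>
    simp only [boxes, List.mem_singleton, List.not_mem_nil, false_implies, implies_true,
      iff_true]
    exact ⟨fun _ => ⊤, rfl, fun i => le_top⟩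
  | cons p l ih =>
    constructor
    · rintro ⟨b, hb, hxb⟩
      simp only [boxes, List.mem_flatMap, List.mem_map] at hb
      obtain ⟨a, ha, j, -, rfl⟩ := hb
      have hxa : inBox x a := by
        intro i
        have h := hxb i
        dsimp only at h
        by_cases hij : i = j
        · rw [if_pos hij] at h
          exact le_trans h (min_le_right _ _)
        · rwa [if_neg hij] at h
      intro p' hp'
      rcases List.mem_cons.1 hp' with rfl | hp'
      · refine ⟨j, ?_⟩
        have h := hxb j
        dsimp only at h
        rw [if_pos rfl] at h
        exact emb_le_e.1 (le_trans h (min_le_left _ _))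
      · exact ih.1 ⟨a, ha, hxa⟩ p' hp'
    · intro h
      obtain ⟨j, hj⟩ := h p List.mem_cons_self
      obtain ⟨a, ha, hxa⟩ := ih.2 fun p' hp' => h p' (List.mem_cons_of_mem _ hp')
      refine ⟨fun i => if i = j then min (e (p i)) (a i) else a i, ?_, ?_⟩
      · simp only [boxes, List.mem_flatMap, List.mem_map]
        exact ⟨a, ha, j, List.mem_finRange j, rfl⟩
      · intro i
        dsimp only
        by_cases hij : i = j
        · subst hij
          rw [if_pos rfl]
          exact le_min (emb_le_e.2 hj) (hxa i)
        · rw [if_neg hij]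
          exact hxa i

lemma D_antitone {n : ℕ} {p q : Fin (n + 1) → ℕ} (hpq : p ≤ q) : D q ⊆ D p := by
  rintro x ⟨hsm, h0, hs⟩
  exact ⟨hsm, le_trans (hpq 0) h0,
    fun i => lt_of_le_of_lt (Nat.add_le_add_left (hpq i.succ) _) (hs i)⟩

lemma hoare_of_sublistForall₂ {β : Type*} {r : β → β → Prop} {l₁ l₂ : List β}
    (h : List.SublistForall₂ r l₁ l₂) : ∀ a ∈ l₁, ∃ b ∈ l₂, r a b := by
  induction h with
  | nil => intro a ha; exact absurd ha List.not_mem_nil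
  | cons hr _ ih =>
    intro a ha
    rcases List.mem_cons.1 ha with rfl | ha
    · exact ⟨_, List.mem_cons_self, hr⟩
    · obtain ⟨b, hb, hab⟩ := ih a ha
      exact ⟨b, List.mem_cons_of_mem _ hb, hab⟩
  | cons_right _ ih =>
    intro a ha
    obtain ⟨b, hb, hab⟩ := ih a ha
    exact ⟨b, List.mem_cons_of_mem _ hb, hab⟩

/-- The key lemma: for any sequence in `FinUnionD n` there are indices `i < j`
with `f j ⊆ f i`. -/
lemma key (n : ℕ) (f : ℕ → Set (Fin (n + 1) → ℕ)) (hf : ∀ i, f i ∈ FinUnionD n) :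
    ∃ i j : ℕ, i < j ∧ f j ⊆ f i := by
  choose F hF using hf
  set L : ℕ → List (Fin (n + 1) → V) := fun i => boxes (F i).toList with hL
  have hpwo : (Set.univ : Set (Fin (n + 1) → V)).IsPWO :=
    Set.isPWO_of_wellQuasiOrderedLE _
  have higman :=
    Set.PartiallyWellOrderedOn.partiallyWellOrderedOn_sublistForall₂
      (α := Fin (n + 1) → V) (· ≤ ·) hpwo
  obtain ⟨i, j, hij, hsub⟩ := higman.exists_lt (f := L) (fun m => by intro x _; trivial)
  refine ⟨i, j, hij, ?_⟩
  have hoare := hoare_of_sublistForall₂ hsub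
  intro x hx
  rw [hF j] at hx
  simp only [Set.mem_iUnion] at hx
  obtain ⟨q, hqF, hq⟩ := hx
  by_cases hv : ∃ p ∈ F i, p ≤ q
  · obtain ⟨p, hp, hpq⟩ := hv
    rw [hF i]
    simp only [Set.mem_iUnion]
    exact ⟨p, hp, D_antitone hpq hq⟩
  · exfalso
    push_neg at hv
    have hq' : ∀ p ∈ (F i).toList, ∃ t, q t < p t := by
      intro p hp
      have h := hv p (by simpa using hp)
      rw [Pi.le_def] at h
      push_neg at h
      exact h
    obtain ⟨b, hb, hqb⟩ := (mem_boxes _ q).2 hq'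
    obtain ⟨b', hb', hbb'⟩ := hoare b hb
    have hqb' : inBox q b' := fun t => le_trans (hqb t) (hbb' t)
    obtain ⟨t, ht⟩ := (mem_boxes ((F j).toList) q).1 ⟨b', hb', hqb'⟩ q (by simpa using hqF)
    exact lt_irrefl _ ht

end FinUnionDAux

/-- The finite unions of sets of the form `D p̄`, ordered by reverse inclusion, form
a well-quasi-order: there is no infinite strictly increasing chain under inclusion
and no infinite antichain under inclusion. -/
theorem finUnionD_wqo (n : ℕ) :
    (¬ ∃ f : ℕ → Set (Fin (n + 1) → ℕ),
      (∀ i, f i ∈ FinUnionD n) ∧ ∀ i j : ℕ, i < j → f i ⊂ f j) ∧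
    (¬ ∃ f : ℕ → Set (Fin (n + 1) → ℕ),
      (∀ i, f i ∈ FinUnionD n) ∧ Function.Injective f ∧
        ∀ i j : ℕ, i ≠ j → ¬ f i ⊆ f j) := by
  constructor
  · rintro ⟨f, hmem, hchain⟩
    obtain ⟨i, j, hij, hle⟩ := FinUnionDAux.key n f hmem
    exact (hchain i j hij).not_subset hle
  · rintro ⟨f, hmem, -, hanti⟩
    obtain ⟨i, j, hij, hle⟩ := FinUnionDAux.key n f hmem
    exact hanti j i hij.ne' hle
end

section
/- In a structure 𝒜, suppose x̄ ≤₁ x̄′ (every existential formula true of x̄′ is true of x̄), and ȳ is a tuple such that for no single element y in ȳ is there a y′ with x̄y ≤₁ x̄′y′. Then for every tuple z̄′ there is a tuple z̄ such that x̄′z̄′ ≤₀ x̄z̄ (z̄ satisfies over x̄ all quantifier-free formulas that z̄′ satisfies over x̄′, up to the relevant Gödel-number bound) and moreover z̄ is disjoint from ȳ (shares no entries with ȳ). -/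
open FirstOrder

/-- `x ≤₁ x'`: every finitary existential formula (an existential closure of a
quantifier-free formula) true of `x'` in the structure is true of `x`. -/
def Le1 (L : Language) (M : Type*) [L.Structure M] {n : ℕ} (x x' : Fin n → M) :
    Prop :=
  ∀ (k : ℕ) (φ : L.BoundedFormula Empty (n + k)), φ.IsQF →
    (∃ w : Fin k → M, φ.Realize (fun e => e.elim) (Fin.append x' w)) →
    ∃ w : Fin k → M, φ.Realize (fun e => e.elim) (Fin.append x w)

namespace Le1Aux

open FirstOrder.Language FirstOrder.Language.BoundedFormula

variable {L : Language} {α : Type*}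

theorem isQF_toFormula : ∀ {n : ℕ} {φ : L.BoundedFormula α n}, φ.IsQF → φ.toFormula.IsQF := by
  intro n φ h
  induction h with
  | falsum => exact isQF_bot
  | of_isAtomic h =>
    cases h with
    | equal t₁ t₂ => exact (IsAtomic.equal _ _).isQF
    | rel R ts => exact (IsAtomic.rel _ _).isQF
  | imp h₁ h₂ ih₁ ih₂ => exact ih₁.imp ih₂

theorem isQF_foldr_inf {n : ℕ} (l : List (L.BoundedFormula α n))
    (h : ∀ φ ∈ l, φ.IsQF) : (l.foldr (· ⊓ ·) ⊤).IsQF := by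
  induction l with
  | nil => exact IsQF.top
  | cons a l ih =>
    exact (h a List.mem_cons_self).inf (ih fun φ hφ => h φ (List.mem_cons_of_mem a hφ))

theorem isQF_iInf {β : Type*} [Finite β] {n : ℕ} (f : β → L.BoundedFormula α n)
    (h : ∀ b, (f b).IsQF) : (BoundedFormula.iInf f).IsQF := by
  unfold BoundedFormula.iInf
  refine isQF_foldr_inf _ ?_
  intro φ hφ
  simp only [List.mem_map] at hφ
  obtain ⟨b, -, rfl⟩ := hφ
  exact h b

/-- Remap the `Fin a` variables of a bounded formula along an arbitrary map. -/
noncomputable def remap {a b : ℕ} (σ : Fin a → Fin b) (ψ : L.BoundedFormula Empty a) :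
    L.BoundedFormula Empty b :=
  BoundedFormula.relabel Sum.inr (ψ.toFormula.relabel (Sum.elim Empty.elim σ))

theorem isQF_remap {a b : ℕ} (σ : Fin a → Fin b) {ψ : L.BoundedFormula Empty a}
    (h : ψ.IsQF) : (remap σ ψ).IsQF :=
  ((isQF_toFormula h).relabel _).relabel _

theorem realize_remap {M : Type*} [L.Structure M] {a b : ℕ} (σ : Fin a → Fin b)
    (ψ : L.BoundedFormula Empty a) (v : Empty → M) (xs : Fin b → M) :
    (remap σ ψ).Realize v xs ↔ ψ.Realize (fun e => e.elim) (xs ∘ σ) := by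
  rw [remap, Formula.realize_relabel_sumInr, Formula.realize_relabel, realize_toFormula]
  constructor <;> intro h <;> convert h using 2 <;> funext e <;> rfl

/-- The map embedding `Fin (n + m)` into `Fin (n + (m + K))`. -/
def sig0 (n m K : ℕ) : Fin (n + m) → Fin (n + (m + K)) := fun t =>
  Sum.elim (fun a => Fin.castAdd (m + K) a) (fun i => Fin.natAdd n (Fin.castAdd K i))
    (finSumFinEquiv.symm t)

theorem comp_sig0 {M : Type*} {n m K : ℕ} (u : Fin n → M) (v : Fin (m + K) → M) :
    (Fin.append u v) ∘ (sig0 n m K) = Fin.append u (fun i => v (Fin.castAdd K i)) := by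
  funext t
  rcases finSumFinEquiv.surjective t with ⟨s, rfl⟩
  cases s with
  | inl a => simp [sig0, Fin.append_left]
  | inr i => simp [sig0, Fin.append_right]

/-- The map embedding `Fin ((n + 1) + k)` into `Fin (n + (m + K))`, sending the
distinguished `n`-th coordinate to slot `i` of the middle block and the `k` witnesses
into the last block along `g`. -/
def sig1 (n m K k : ℕ) (i : Fin m) (g : Fin k → Fin K) :
    Fin ((n + 1) + k) → Fin (n + (m + K)) := fun t =>
  Sum.elim
    (fun s => Fin.lastCases (Fin.natAdd n (Fin.castAdd K i))
      (fun a => Fin.castAdd (m + K) a) s)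
    (fun t => Fin.natAdd n (Fin.natAdd m (g t)))
    (finSumFinEquiv.symm t)

theorem comp_sig1 {M : Type*} {n m K k : ℕ} (i : Fin m) (g : Fin k → Fin K)
    (u : Fin n → M) (v : Fin (m + K) → M) :
    (Fin.append u v) ∘ (sig1 n m K k i g) =
      Fin.append (Fin.snoc u (v (Fin.castAdd K i))) (fun t => v (Fin.natAdd m (g t))) := by
  funext t
  rcases finSumFinEquiv.surjective t with ⟨s, rfl⟩
  cases s with
  | inl a =>
    refine Fin.lastCases ?_ (fun b => ?_) a
    · simp [sig1, Fin.append_left, Fin.append_right]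
    · simp [sig1, Fin.append_left]
  | inr t => simp [sig1, Fin.append_right]

end Le1Aux

open Le1Aux FirstOrder.Language FirstOrder.Language.BoundedFormula

/-- Suppose `x̄ ≤₁ x̄'`, and `ȳ` is a tuple such that for no entry `y` of `ȳ` is
there a `y'` with `x̄y ≤₁ x̄'y'`. Then for every tuple `z̄'` and every
quantifier-free formula `φ` with `φ(x̄', z̄')`, there is a tuple `z̄`, disjoint
from `ȳ`, with `φ(x̄, z̄)`. -/
theorem le1_avoid (L : Language) (M : Type*) [L.Structure M] {n p m : ℕ}
    (x x' : Fin n → M) (hx : Le1 L M x x')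
    (y : Fin p → M)
    (hy : ∀ (j : Fin p) (y' : M), ¬ Le1 L M (Fin.snoc x (y j)) (Fin.snoc x' y'))
    (z' : Fin m → M) (φ : L.BoundedFormula Empty (n + m)) (hφ : φ.IsQF) :
    ∃ z : Fin m → M, (∀ (i : Fin m) (j : Fin p), z i ≠ y j) ∧
      (φ.Realize (fun e => e.elim) (Fin.append x' z') →
        φ.Realize (fun e => e.elim) (Fin.append x z)) := by
  classical
  have H : ∀ (i : Fin m) (j : Fin p), ∃ (k : ℕ) (ψ : L.BoundedFormula Empty (n + 1 + k)),
      ψ.IsQF ∧ (∃ w : Fin k → M,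
        ψ.Realize (fun e => e.elim) (Fin.append (Fin.snoc x' (z' i)) w)) ∧
      ∀ w : Fin k → M, ¬ ψ.Realize (fun e => e.elim) (Fin.append (Fin.snoc x (y j)) w) := by
    intro i j
    have h := hy j (z' i)
    unfold Le1 at h
    push_neg at h
    exact h
  choose k ψ hQF hex hno using H
  choose w' hw' using hex
  -- Index everything by a single `Fin K`.
  set T := (Σ ij : Fin m × Fin p, Fin (k ij.1 ij.2)) with hT
  let K := Fintype.card T
  let e : T ≃ Fin K := Fintype.equivFin T
  have key : ∀ (χ : L.BoundedFormula Empty (n + m)), χ.IsQF →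
      χ.Realize (fun e => e.elim) (Fin.append x' z') →
      ∃ z : Fin m → M, (∀ (i : Fin m) (j : Fin p), z i ≠ y j) ∧
        χ.Realize (fun e => e.elim) (Fin.append x z) := by
    intro χ hχ hreal
    set Φ : L.BoundedFormula Empty (n + (m + K)) :=
      (remap (sig0 n m K) χ) ⊓
        (BoundedFormula.iInf (β := Fin m × Fin p)
          (fun ij => remap (sig1 n m K (k ij.1 ij.2) ij.1
            (fun t => e ⟨ij, t⟩)) (ψ ij.1 ij.2))) with hΦ
    have hΦQF : Φ.IsQF :=
      (isQF_remap _ hχ).inf (isQF_iInf _ fun ij => isQF_remap _ (hQF ij.1 ij.2))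
    have hΦex : ∃ w : Fin (m + K) → M, Φ.Realize (fun e => e.elim) (Fin.append x' w) := by
      refine ⟨Fin.append z' (fun t => (fun s : T => w' s.1.1 s.1.2 s.2) (e.symm t)), ?_⟩
      rw [hΦ, realize_inf, realize_remap, comp_sig0, realize_iInf]
      constructor
      · convert hreal using 2
        funext i
        simp [Fin.append_left]
      · intro ij
        rw [realize_remap, comp_sig1]
        have h1 : Fin.append z' (fun t => (fun s : T => w' s.1.1 s.1.2 s.2) (e.symm t))
            (Fin.castAdd K ij.1) = z' ij.1 := Fin.append_left _ _ _
        have h2 : ∀ t : Fin (k ij.1 ij.2),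
            Fin.append z' (fun t => (fun s : T => w' s.1.1 s.1.2 s.2) (e.symm t))
              (Fin.natAdd m (e ⟨ij, t⟩)) = w' ij.1 ij.2 t := by
          intro t
          rw [Fin.append_right]
          exact congrArg (fun s : T => w' s.1.1 s.1.2 s.2) (e.symm_apply_apply ⟨ij, t⟩)
        rw [h1, funext h2]
        exact hw' ij.1 ij.2
    obtain ⟨w, hw⟩ := hx (m + K) Φ hΦQF hΦex
    rw [hΦ, realize_inf, realize_remap, comp_sig0, realize_iInf] at hw
    refine ⟨fun i => w (Fin.castAdd K i), ?_, hw.1⟩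
    intro i j hzy
    have hzy' : w (Fin.castAdd K i) = y j := hzy
    have h := hw.2 (i, j)
    rw [realize_remap, comp_sig1] at h
    dsimp only at h
    rw [hzy'] at h
    exact hno i j _ h
  by_cases hreal : φ.Realize (fun e => e.elim) (Fin.append x' z')
  · obtain ⟨z, hz1, hz2⟩ := key φ hφ hreal
    exact ⟨z, hz1, fun _ => hz2⟩
  · obtain ⟨z, hz1, -⟩ := key ⊤ IsQF.top (by simp)
    exact ⟨z, hz1, fun h => absurd h hreal⟩
end
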